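/- Let (R, m) be a commutative noetherian local ring and let M be an R-module. Suppose (p_i)_{i ∈ ℕ} is a sequence of prime ideals each attached to M, and suppose that the intersection q := ⋂_{i ∈ ℕ} p_i is a prime ideal of R. Then q is attached to M, i.e. q ∈ Att_R(M). -/
import Mathlib


/-- `attachedPrimes R M` is the set of prime ideals `p` of `R` attached to the `R`-module `M`,
i.e. such that `p` is the annihilator of some quotient of `M`. -/
def attachedPrimes (R : Type*) [CommRing R] (M : Type*) [AddCommGroup M] [Module R M] :
    Set (Ideal R) :=
  {p | p.IsPrime ∧ ∃ U : Submodule R M, p = Module.annihilator R (M ⧸ U)}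

/-- over a noetherian local ring, if `(p i)` is a sequence of primes attached to
`M` whose intersection `q = ⋂ i, p i` is prime, then `q` is attached to `M`. -/
theorem stmt3 (R : Type*) [CommRing R] [IsNoetherianRing R] [IsLocalRing R]
    (M : Type*) [AddCommGroup M] [Module R M]
    (p : ℕ → Ideal R) (hp : ∀ i, p i ∈ attachedPrimes R M)
    (hq : (⨅ i, p i).IsPrime) :
    (⨅ i, p i) ∈ attachedPrimes R M := by
  set q : Ideal R := ⨅ i, p i with hqdef
  refine ⟨hq, ⟨q • ⊤, le_antisymm ?_ ?_⟩⟩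
  · -- q ≤ annihilator of M ⧸ qM
    intro r hr
    rw [Module.mem_annihilator]
    intro x
    refine Quotient.inductionOn' x (fun m => ?_)
    show r • Submodule.Quotient.mk m = 0
    rw [← Submodule.Quotient.mk_smul, Submodule.Quotient.mk_eq_zero]
    exact Submodule.smul_mem_smul hr trivial
  · -- annihilator ≤ q = ⨅ p i
    rw [hqdef, le_iInf_iff]
    intro i
    obtain ⟨hpi, U, hU⟩ := hp i
    -- q • ⊤ ≤ U
    have hsub : q • (⊤ : Submodule R M) ≤ U := by
      refine Submodule.smul_le.2 fun a ha m _ => ?_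
      have ha' : a ∈ p i := (iInf_le p i) ha
      rw [hU, Module.mem_annihilator] at ha'
      have := ha' (Submodule.Quotient.mk m)
      rwa [← Submodule.Quotient.mk_smul, Submodule.Quotient.mk_eq_zero] at this
    intro r hr
    rw [hU, Module.mem_annihilator]
    intro x
    refine Quotient.inductionOn' x (fun m => ?_)
    show r • Submodule.Quotient.mk m = 0
    rw [← Submodule.Quotient.mk_smul, Submodule.Quotient.mk_eq_zero]
    refine hsub ?_
    rw [Module.mem_annihilator] at hr
    have := hr (Submodule.Quotient.mk m)
    rwa [← Submodule.Quotient.mk_smul, Submodule.Quotient.mk_eq_zero] at this
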